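/- Let d, n_p, n_q be natural numbers. Let χ be a real n_q × n_p matrix and W a diagonal real n_q × n_q matrix such that M₀ := χᵀWχ is invertible, and set Π := M₀⁻¹χᵀW. For each r ∈ {1,…,d} let Ĝ_r be a real n_p × n_p matrix and set D_r := χ·Ĝ_r. Let Z be a finite set and for each z ∈ Z let φ_z ∈ ℝ^{n_p}, w_z ∈ ℝ, n_z ∈ ℝ^d, and Cf_z a real d × d matrix. Assume the summation-by-parts property: for each r, χᵀ W D_r + D_rᵀ W χ = Σ_{z∈Z} w_z (n_z)_r φ_zᵀ φ_z. Assume moreover: (i) there is ê ∈ ℝ^{n_p} with χ·ê = (1,…,1)ᵀ, φ_z·ê = 1 for all z, and Ĝ_r·ê = 0 for all r; (ii) there are vectors ĉ_{e,r} ∈ ℝ^{n_p} such that the volume metric matrices are Cv_{e,r} = diag(χ·ĉ_{e,r}) and the facet metrics satisfy (Cf_z)_{e,r} = φ_z·ĉ_{e,r}; and (iii) the discrete geometric conservation law holds: Σ_r Ĝ_r·ĉ_{e,r} = 0 for each e. Let a ∈ ℝ^d and N a real n_p × n_p matrix. Given û ∈ ℝ^{n_p}, set u_z := φ_z·û, ĝ_r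 := Π·( Σ_e a_e · Cv_{e,r} · (χ·û) ), and t ∈ ℝ^{n_q} with t_q := Σ_{r,e} (Cv_{e,r})_{q,q} · a_e · (D_r·û)_q. Suppose v ∈ ℝ^{n_p} and the numerical-flux values f*_z ∈ ℝ^d satisfy the split-form scheme N·v + (1/2)·Σ_r χᵀ W D_r ĝ_r + (1/2)·χᵀ W t + Σ_z w_z φ_zᵀ s_z = 0, where s_z := Σ_r (n_z)_r · [ Σ_e (Cf_z)_{e,r} · ( f*_{z,e} − (1/2)·a_e·u_z ) − (1/2)·(φ_z·ĝ_r) ]. Then the scheme is locally conservative: êᵀ·N·v = − Σ_z w_z · Σ_r (n_z)_r · Σ_e (Cf_z)_{e,r} · f*_{z,e}. -/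

import Mathlib

open Matrix


private lemma sumMat_mulVec {ι m n : Type*} [Fintype ι] [Fintype n]
    (A : ι → Matrix m n ℝ) (x : n → ℝ) :
    (∑ i, A i) *ᵥ x = ∑ i, A i *ᵥ x := by
  ext j
  simp only [Matrix.mulVec, dotProduct, Matrix.sum_apply, Finset.sum_apply, Finset.sum_mul]
  rw [Finset.sum_comm]

private lemma dot_sum' {ι n : Type*} [Fintype ι] [Fintype n] (x : n → ℝ) (v : ι → n → ℝ) :
    x ⬝ᵥ (∑ i, v i) = ∑ i, x ⬝ᵥ v i := by
  simp only [dotProduct, Matrix.sum_apply, Finset.sum_apply, Finset.mul_sum]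
  rw [Finset.sum_comm]

private lemma sum_dot' {ι n : Type*} [Fintype ι] [Fintype n] (x : n → ℝ) (v : ι → n → ℝ) :
    (∑ i, v i) ⬝ᵥ x = ∑ i, v i ⬝ᵥ x := by
  simp only [dotProduct, Matrix.sum_apply, Finset.sum_apply, Finset.sum_mul]
  rw [Finset.sum_comm]

private lemma mulVec_sum' {ι m n : Type*} [Fintype ι] [Fintype n]
    (A : Matrix m n ℝ) (v : ι → n → ℝ) :
    A *ᵥ (∑ i, v i) = ∑ i, A *ᵥ v i := by
  ext j
  simp only [Matrix.mulVec, dotProduct, Matrix.sum_apply, Finset.sum_apply, Finset.mul_sum]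
  rw [Finset.sum_comm]

private lemma vecMulVec_mulVec' {m n : Type*} [Fintype n] (u : m → ℝ) (v y : n → ℝ) :
    Matrix.vecMulVec u v *ᵥ y = (v ⬝ᵥ y) • u := by
  ext i
  simp only [Matrix.mulVec, dotProduct, Matrix.vecMulVec_apply, Pi.smul_apply,
    smul_eq_mul, Finset.sum_mul]
  refine Finset.sum_congr rfl fun j _ => by ring


/-- Local conservation of the proposed provably stable flux reconstruction split form for
linear advection: under the SBP property, the existence of modal coefficients `ehat` of the
constant function 1 annihilated by the derivative operators, interpolation-consistent metric
terms (volume metrics `Cv` and facet metrics `Cf` coming from the same modal coefficients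
`chat`), and the discrete geometric conservation law, the rate of change of the conserved
quantity in the `N = M_m + K_m` norm equals the boundary integral of the numerical flux. -/
theorem fr_split_form_local_conservation
    (d n_p n_q : ℕ)
    (χ : Matrix (Fin n_q) (Fin n_p) ℝ)
    (W : Matrix (Fin n_q) (Fin n_q) ℝ) (hWdiag : W.IsDiag)
    (hM₀ : IsUnit (χᵀ * W * χ))
    (Ghat : Fin d → Matrix (Fin n_p) (Fin n_p) ℝ)
    (Z : Type) [Fintype Z]
    (φ : Z → Fin n_p → ℝ) (w : Z → ℝ) (nrm : Z → Fin d → ℝ)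
    (Cf : Z → Matrix (Fin d) (Fin d) ℝ)
    -- summation-by-parts property
    (hSBP : ∀ r : Fin d,
      χᵀ * W * (χ * Ghat r) + (χ * Ghat r)ᵀ * W * χ =
        ∑ z : Z, (w z * nrm z r) • vecMulVec (φ z) (φ z))
    -- (i) modal coefficients of the constant function 1
    (ehat : Fin n_p → ℝ)
    (hehat1 : χ.mulVec ehat = fun _ => 1)
    (hehat2 : ∀ z : Z, φ z ⬝ᵥ ehat = 1)
    (hehat3 : ∀ r : Fin d, (Ghat r).mulVec ehat = 0)
    -- (ii) metric terms from common modal coefficients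
    (Cv : Fin d → Fin d → Matrix (Fin n_q) (Fin n_q) ℝ)
    (chat : Fin d → Fin d → Fin n_p → ℝ)
    (hCv : ∀ e r, Cv e r = Matrix.diagonal (χ.mulVec (chat e r)))
    (hCf : ∀ (z : Z) (e r : Fin d), Cf z e r = φ z ⬝ᵥ chat e r)
    -- (iii) discrete geometric conservation law
    (hGCL : ∀ e : Fin d, ∑ r : Fin d, (Ghat r).mulVec (chat e r) = 0)
    (a : Fin d → ℝ)
    (N : Matrix (Fin n_p) (Fin n_p) ℝ)
    (uhat : Fin n_p → ℝ)
    (ghat : Fin d → Fin n_p → ℝ)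
    (hghat : ∀ r, ghat r =
      ((χᵀ * W * χ)⁻¹ * χᵀ * W).mulVec (∑ e : Fin d, a e • (Cv e r).mulVec (χ.mulVec uhat)))
    (t : Fin n_q → ℝ)
    (ht : ∀ q, t q = ∑ r : Fin d, ∑ e : Fin d,
      Cv e r q q * a e * (χ * Ghat r).mulVec uhat q)
    (v : Fin n_p → ℝ)
    (fstar : Z → Fin d → ℝ)
    (s : Z → ℝ)
    (hs : ∀ z, s z = ∑ r : Fin d, nrm z r *
      ((∑ e : Fin d, Cf z e r * (fstar z e - (1 / 2 : ℝ) * a e * (φ z ⬝ᵥ uhat)))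
        - (1 / 2 : ℝ) * (φ z ⬝ᵥ ghat r)))
    -- the split-form scheme
    (hscheme :
      N.mulVec v
        + (1 / 2 : ℝ) • (∑ r : Fin d, (χᵀ * W).mulVec ((χ * Ghat r).mulVec (ghat r)))
        + (1 / 2 : ℝ) • (χᵀ * W).mulVec t
        + ∑ z : Z, (w z * s z) • φ z = 0) :
    ehat ⬝ᵥ N.mulVec v =
      - ∑ z : Z, w z * ∑ r : Fin d, nrm z r * ∑ e : Fin d, Cf z e r * fstar z e := by

  classical
  -- generic triple sum swap
  have sum_swap3 : ∀ {α β γ : Type} [Fintype α] [Fintype β] [Fintype γ] (F : α → β → γ → ℝ),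
      ∑ x : α, ∑ y : β, ∑ u : γ, F x y u = ∑ u : γ, ∑ y : β, ∑ x : α, F x y u := by
    intro α β γ _ _ _ F
    calc ∑ x : α, ∑ y : β, ∑ u : γ, F x y u
        = ∑ y : β, ∑ x : α, ∑ u : γ, F x y u := Finset.sum_comm
      _ = ∑ y : β, ∑ u : γ, ∑ x : α, F x y u :=
          Finset.sum_congr rfl fun y _ => Finset.sum_comm
      _ = ∑ u : γ, ∑ y : β, ∑ x : α, F x y u := Finset.sum_comm
  -- scalar SBP identity
  have key : ∀ (r : Fin d) (x y : Fin n_p → ℝ),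
      x ⬝ᵥ (χᵀ * W * (χ * Ghat r)) *ᵥ y
        + ((χ * Ghat r) *ᵥ x) ⬝ᵥ (W *ᵥ (χ *ᵥ y)) =
      ∑ z : Z, (w z * nrm z r) * ((φ z ⬝ᵥ x) * (φ z ⬝ᵥ y)) := by
    intro r x y
    have h := congrArg (fun M : Matrix (Fin n_p) (Fin n_p) ℝ => x ⬝ᵥ (M *ᵥ y)) (hSBP r)
    have hB : x ⬝ᵥ ((χ * Ghat r)ᵀ * W * χ) *ᵥ y = ((χ * Ghat r) *ᵥ x) ⬝ᵥ (W *ᵥ (χ *ᵥ y)) := by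
      rw [Matrix.mul_assoc, ← Matrix.mulVec_mulVec, Matrix.dotProduct_mulVec,
          Matrix.vecMul_transpose]
      rw [Matrix.mulVec_mulVec y W χ]
    rw [Matrix.add_mulVec, dotProduct_add, hB, sumMat_mulVec, dot_sum'] at h
    rw [h]
    refine Finset.sum_congr rfl fun z _ => ?_
    rw [Matrix.smul_mulVec, vecMulVec_mulVec', dotProduct_smul, dotProduct_smul,
        smul_eq_mul, smul_eq_mul, dotProduct_comm x (φ z)]
    ring
  have hDe : ∀ r : Fin d, (χ * Ghat r) *ᵥ ehat = 0 := fun r => by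
    rw [← Matrix.mulVec_mulVec, hehat3, Matrix.mulVec_zero]
  -- term 2
  have hT2 : ∀ r : Fin d,
      ehat ⬝ᵥ (χᵀ * W) *ᵥ ((χ * Ghat r) *ᵥ ghat r)
        = ∑ z : Z, (w z * nrm z r) * (φ z ⬝ᵥ ghat r) := by
    intro r
    have h := key r ehat (ghat r)
    rw [hDe r, zero_dotProduct, add_zero] at h
    rw [Matrix.mulVec_mulVec, h]
    refine Finset.sum_congr rfl fun z _ => by rw [hehat2 z, one_mul]
  -- application of diagonal W
  have hWapp : ∀ (x : Fin n_q → ℝ) (q : Fin n_q), (W *ᵥ x) q = W q q * x q := by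
    intro x q
    conv_lhs => rw [← hWdiag.diagonal_diag]
    rw [Matrix.mulVec_diagonal]
    rfl
  have hWt : ∀ (x : Fin n_q → ℝ), ehat ⬝ᵥ (χᵀ * W) *ᵥ x = ∑ q : Fin n_q, W q q * x q := by
    intro x
    rw [← Matrix.mulVec_mulVec, Matrix.dotProduct_mulVec, Matrix.vecMul_transpose, hehat1]
    simp [dotProduct, hWapp]
  have hquad : ∀ (r : Fin d) (c : Fin n_p → ℝ),
      c ⬝ᵥ (χᵀ * W * (χ * Ghat r)) *ᵥ uhat
        = ∑ q : Fin n_q, (χ *ᵥ c) q * (W q q * ((χ * Ghat r) *ᵥ uhat) q) := by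
    intro r c
    rw [show χᵀ * W * (χ * Ghat r) = χᵀ * (W * (χ * Ghat r)) from Matrix.mul_assoc _ _ _,
        ← Matrix.mulVec_mulVec (M := χᵀ), Matrix.dotProduct_mulVec, Matrix.vecMul_transpose,
        ← Matrix.mulVec_mulVec (M := W)]
    simp [dotProduct, hWapp]
  have hGCL' : ∀ e : Fin d, ∑ r : Fin d, ((χ * Ghat r) *ᵥ chat e r) = 0 := by
    intro e
    calc ∑ r : Fin d, (χ * Ghat r) *ᵥ chat e r
        = ∑ r : Fin d, χ *ᵥ ((Ghat r) *ᵥ chat e r) :=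
          Finset.sum_congr rfl fun r _ => (Matrix.mulVec_mulVec _ _ _).symm
      _ = χ *ᵥ (∑ r : Fin d, (Ghat r) *ᵥ chat e r) := (mulVec_sum' _ _).symm
      _ = 0 := by rw [hGCL, Matrix.mulVec_zero]
  -- term 3
  have hT3 : ehat ⬝ᵥ (χᵀ * W) *ᵥ t
      = ∑ z : Z, ∑ r : Fin d, ∑ e : Fin d,
          (w z * nrm z r) * (Cf z e r * (a e * (φ z ⬝ᵥ uhat))) := by
    have inner : ∀ e r : Fin d,
        ∑ q : Fin n_q, W q q * ((χ *ᵥ chat e r) q * a e * ((χ * Ghat r) *ᵥ uhat) q)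
          = a e * (chat e r ⬝ᵥ (χᵀ * W * (χ * Ghat r)) *ᵥ uhat) := by
      intro e r
      rw [hquad, Finset.mul_sum]
      exact Finset.sum_congr rfl fun q _ => by ring
    calc ehat ⬝ᵥ (χᵀ * W) *ᵥ t
        = ∑ q : Fin n_q, W q q * t q := hWt t
      _ = ∑ q : Fin n_q, ∑ r : Fin d, ∑ e : Fin d,
            W q q * ((χ *ᵥ chat e r) q * a e * ((χ * Ghat r) *ᵥ uhat) q) := by
          simp only [ht, hCv, Matrix.diagonal_apply_eq, Finset.mul_sum]
      _ = ∑ e : Fin d, ∑ r : Fin d, ∑ q : Fin n_q,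
            W q q * ((χ *ᵥ chat e r) q * a e * ((χ * Ghat r) *ᵥ uhat) q) := sum_swap3 _
      _ = ∑ e : Fin d, ∑ r : Fin d,
            a e * (chat e r ⬝ᵥ (χᵀ * W * (χ * Ghat r)) *ᵥ uhat) :=
          Finset.sum_congr rfl fun e _ => Finset.sum_congr rfl fun r _ => inner e r
      _ = ∑ e : Fin d, ∑ r : Fin d,
            a e * ((∑ z : Z, (w z * nrm z r) * ((φ z ⬝ᵥ chat e r) * (φ z ⬝ᵥ uhat)))
              - ((χ * Ghat r) *ᵥ chat e r) ⬝ᵥ (W *ᵥ (χ *ᵥ uhat))) := by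
          refine Finset.sum_congr rfl fun e _ => Finset.sum_congr rfl fun r _ => ?_
          rw [eq_sub_of_add_eq (key r (chat e r) uhat)]
      _ = ∑ e : Fin d, ∑ r : Fin d,
            a e * (∑ z : Z, (w z * nrm z r) * ((φ z ⬝ᵥ chat e r) * (φ z ⬝ᵥ uhat))) := by
          refine Finset.sum_congr rfl fun e _ => ?_
          have hz : ∑ r : Fin d,
              a e * (((χ * Ghat r) *ᵥ chat e r) ⬝ᵥ (W *ᵥ (χ *ᵥ uhat))) = 0 := by
            rw [← Finset.mul_sum, ← sum_dot', hGCL' e, zero_dotProduct, mul_zero]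
          calc ∑ r : Fin d, a e * ((∑ z : Z, (w z * nrm z r) * ((φ z ⬝ᵥ chat e r) * (φ z ⬝ᵥ uhat)))
                  - ((χ * Ghat r) *ᵥ chat e r) ⬝ᵥ (W *ᵥ (χ *ᵥ uhat)))
              = ∑ r : Fin d, (a e * (∑ z : Z, (w z * nrm z r) * ((φ z ⬝ᵥ chat e r) * (φ z ⬝ᵥ uhat)))
                  - a e * (((χ * Ghat r) *ᵥ chat e r) ⬝ᵥ (W *ᵥ (χ *ᵥ uhat)))) :=
                Finset.sum_congr rfl fun r _ => by ring
            _ = (∑ r : Fin d, a e * (∑ z : Z, (w z * nrm z r) * ((φ z ⬝ᵥ chat e r) * (φ z ⬝ᵥ uhat))))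
                  - ∑ r : Fin d, a e * (((χ * Ghat r) *ᵥ chat e r) ⬝ᵥ (W *ᵥ (χ *ᵥ uhat))) :=
                Finset.sum_sub_distrib _ _
            _ = ∑ r : Fin d, a e * (∑ z : Z, (w z * nrm z r) * ((φ z ⬝ᵥ chat e r) * (φ z ⬝ᵥ uhat))) := by
                rw [hz, sub_zero]
      _ = ∑ e : Fin d, ∑ r : Fin d, ∑ z : Z,
            (w z * nrm z r) * (Cf z e r * (a e * (φ z ⬝ᵥ uhat))) := by
          refine Finset.sum_congr rfl fun e _ => Finset.sum_congr rfl fun r _ => ?_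
          rw [Finset.mul_sum]
          exact Finset.sum_congr rfl fun z _ => by rw [hCf]; ring
      _ = ∑ z : Z, ∑ r : Fin d, ∑ e : Fin d,
            (w z * nrm z r) * (Cf z e r * (a e * (φ z ⬝ᵥ uhat))) := sum_swap3 _
  -- term 4 (numerical flux term)
  have hs' : ∀ z : Z, w z * s z
      = w z * (∑ r : Fin d, nrm z r * ∑ e : Fin d, Cf z e r * fstar z e)
        - (1 / 2 : ℝ) * (∑ r : Fin d, ∑ e : Fin d,
            (w z * nrm z r) * (Cf z e r * (a e * (φ z ⬝ᵥ uhat))))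
        - (1 / 2 : ℝ) * (∑ r : Fin d, (w z * nrm z r) * (φ z ⬝ᵥ ghat r)) := by
    intro z
    rw [hs z, Finset.mul_sum, Finset.mul_sum, Finset.mul_sum, Finset.mul_sum,
        ← Finset.sum_sub_distrib, ← Finset.sum_sub_distrib]
    refine Finset.sum_congr rfl fun r _ => ?_
    have hsplit : ∑ e : Fin d, Cf z e r * (fstar z e - (1 / 2 : ℝ) * a e * (φ z ⬝ᵥ uhat))
        = (∑ e : Fin d, Cf z e r * fstar z e)
          - (1 / 2 : ℝ) * ∑ e : Fin d, Cf z e r * (a e * (φ z ⬝ᵥ uhat)) := by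
      rw [Finset.mul_sum, ← Finset.sum_sub_distrib]
      exact Finset.sum_congr rfl fun e _ => by ring
    have hC : ∑ e : Fin d, (w z * nrm z r) * (Cf z e r * (a e * (φ z ⬝ᵥ uhat)))
        = (w z * nrm z r) * ∑ e : Fin d, Cf z e r * (a e * (φ z ⬝ᵥ uhat)) :=
      (Finset.mul_sum _ _ _).symm
    rw [hsplit, hC]
    ring
  -- take the dot product of the scheme with ehat
  have H := congrArg (fun x : Fin n_p → ℝ => ehat ⬝ᵥ x) hscheme
  simp only [dotProduct_add, dotProduct_smul, smul_eq_mul, dot_sum', dotProduct_zero] at H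
  have hT4 : ∀ z : Z, ehat ⬝ᵥ (w z * s z) • φ z = w z * s z := by
    intro z
    rw [dotProduct_smul, smul_eq_mul, dotProduct_comm, hehat2 z, mul_one]
  have e2 : ∑ i : Fin d, ehat ⬝ᵥ (χᵀ * W) *ᵥ (χ * Ghat i) *ᵥ ghat i
      = ∑ r : Fin d, ∑ z : Z, (w z * nrm z r) * (φ z ⬝ᵥ ghat r) :=
    Finset.sum_congr rfl fun r _ => hT2 r
  have e4 : ∑ x : Z, w x * s x * ehat ⬝ᵥ φ x = ∑ z : Z, w z * s z :=
    Finset.sum_congr rfl fun z _ => by rw [dotProduct_comm, hehat2 z, mul_one]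
  have hP : ∑ r : Fin d, ∑ z : Z, (w z * nrm z r) * (φ z ⬝ᵥ ghat r)
      = ∑ z : Z, ∑ r : Fin d, (w z * nrm z r) * (φ z ⬝ᵥ ghat r) := Finset.sum_comm
  have hS4 : ∑ z : Z, w z * s z
      = (∑ z : Z, w z * (∑ r : Fin d, nrm z r * ∑ e : Fin d, Cf z e r * fstar z e))
        - (1 / 2 : ℝ) * (∑ z : Z, ∑ r : Fin d, ∑ e : Fin d,
            (w z * nrm z r) * (Cf z e r * (a e * (φ z ⬝ᵥ uhat))))
        - (1 / 2 : ℝ) * (∑ z : Z, ∑ r : Fin d, (w z * nrm z r) * (φ z ⬝ᵥ ghat r)) := by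
    rw [Finset.mul_sum, Finset.mul_sum, ← Finset.sum_sub_distrib, ← Finset.sum_sub_distrib]
    exact Finset.sum_congr rfl fun z _ => hs' z
  rw [e2, e4, hT3, hP, hS4] at H
  linarith [H]
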